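/- Let ρ_W = p|φ⁺⟩⟨φ⁺| + ((1−p)/4)𝟙 be the two-qubit Werner state with |φ⁺⟩ = (|00⟩+|11⟩)/√2 and 0 ≤ p ≤ 1. For the POVMs M_i^0 = (2/3)|v_i⟩⟨v_i|, M_i^1 = (2/3)|ṽ_i⟩⟨ṽ_i|, M_i^2 = (2/3)|i⟩⟨i| (with |v_0⟩ = (|0⟩+√3|1⟩)/2, |v_1⟩ = (√3|0⟩−|1⟩)/2, |ṽ_i⟩ = diag(1,−1)|v_i⟩) and Bob's measurements N_i^0 = (|v_i⟩⟨v_i|)ᵀ, N_i^1 = (|ṽ_i⟩⟨ṽ_i|)ᵀ, N_i^2 = |i⟩⟨i|, the distinguishing probability (1/2)∑_{i,a} Tr[ρ_W (M_i^a ⊗ N_i^a)] equals (1+p)/2. -/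

import Mathlib

set_option maxHeartbeats 16000000


open Matrix Complex BigOperators Kronecker

noncomputable section

/-- `|v_0⟩ = (|0⟩ + √3|1⟩)/2` and `|v_1⟩ = (√3|0⟩ − |1⟩)/2`. -/
def v : Fin 2 → Fin 2 → ℂ := ![![1 / 2, Real.sqrt 3 / 2], ![Real.sqrt 3 / 2, -(1 / 2)]]

/-- `|ṽ_i⟩ = diag(1,−1)|v_i⟩`. -/
def vt (i : Fin 2) : Fin 2 → ℂ := (Matrix.diagonal ![1, -1]) *ᵥ v i

/-- Standard basis vector `|i⟩` of `ℂ²`. -/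
def ket (i : Fin 2) : Fin 2 → ℂ := fun j => if j = i then 1 else 0

/-- Alice's POVM elements `M_i^a`. -/
def M (i : Fin 2) : Fin 3 → Matrix (Fin 2) (Fin 2) ℂ :=
  ![(2 / 3 : ℂ) • vecMulVec (v i) (star (v i)),
    (2 / 3 : ℂ) • vecMulVec (vt i) (star (vt i)),
    (2 / 3 : ℂ) • vecMulVec (ket i) (star (ket i))]

/-- Bob's projective measurement elements `N_i^a`. -/
def N (i : Fin 2) : Fin 3 → Matrix (Fin 2) (Fin 2) ℂ :=
  ![(vecMulVec (v i) (star (v i)))ᵀ,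
    (vecMulVec (vt i) (star (vt i)))ᵀ,
    vecMulVec (ket i) (star (ket i))]

/-- The two-qubit maximally entangled state `|φ⁺⟩ = (|00⟩+|11⟩)/√2`. -/
def phiPlus : Fin 2 × Fin 2 → ℂ :=
  fun p => if p.1 = p.2 then (1 / Real.sqrt 2 : ℂ) else 0

/-- The two-qubit Werner state `ρ_W = p|φ⁺⟩⟨φ⁺| + ((1−p)/4)𝟙`. -/
def werner (p : ℝ) : Matrix (Fin 2 × Fin 2) (Fin 2 × Fin 2) ℂ :=
  (p : ℂ) • vecMulVec phiPlus (star phiPlus) +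
    (((1 - p) / 4 : ℝ) : ℂ) • 1

/-- For the Werner state, the distinguishing probability
`(1/2)∑_{i,a} Tr[ρ_W (M_i^a ⊗ N_i^a)]` equals `(1+p)/2`. -/
theorem werner_discrimination (p : ℝ) (hp0 : 0 ≤ p) (hp1 : p ≤ 1) :
    (1 / 2 : ℂ) * ∑ i : Fin 2, ∑ a : Fin 3,
        (werner p * (M i a ⊗ₖ N i a)).trace = ((1 + p) / 2 : ℝ) := by
  have hvt0 : vt 0 = ![1 / 2, -((Real.sqrt 3 : ℂ) / 2)] := by
    funext j
    fin_cases j <;>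
      simp [vt, v, Matrix.mulVec, dotProduct, Fin.sum_univ_succ, Matrix.diagonal] <;> ring
  have hvt1 : vt 1 = ![(Real.sqrt 3 : ℂ) / 2, 1 / 2] := by
    funext j
    fin_cases j <;>
      simp [vt, v, Matrix.mulVec, dotProduct, Fin.sum_univ_succ, Matrix.diagonal] <;> ring
  have hk0 : ket 0 = ![1, 0] := by
    funext j; fin_cases j <;> simp [ket]
  have hk1 : ket 1 = ![0, 1] := by
    funext j; fin_cases j <;> simp [ket]
  have hsphi : star phiPlus = phiPlus := by
    funext q; simp [phiPlus, Pi.star_apply, apply_ite (starRingEnd ℂ)]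
  set s : ℂ := (Real.sqrt 3 : ℂ) with hs
  set t : ℂ := (Real.sqrt 2 : ℂ) with ht
  have hs2 : s ^ 2 = 3 := by
    rw [hs, ← Complex.ofReal_pow, Real.sq_sqrt (by norm_num : (0:ℝ) ≤ 3)]; norm_num
  have ht2 : t ^ 2 = 2 := by
    rw [ht, ← Complex.ofReal_pow, Real.sq_sqrt (by norm_num : (0:ℝ) ≤ 2)]; norm_num
  have hs3 : s ^ 3 = 3 * s := by rw [pow_succ, hs2]
  have hs4 : s ^ 4 = 9 := by rw [show (4:ℕ)=2*2 from rfl, pow_mul, hs2]; norm_num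
  have ht4 : t ^ 4 = 4 := by rw [show (4:ℕ)=2*2 from rfl, pow_mul, ht2]; norm_num
  have hcs : (starRingEnd ℂ) s = s := by rw [hs]; exact Complex.conj_ofReal _
  have hct : (starRingEnd ℂ) t = t := by rw [ht]; exact Complex.conj_ofReal _
  have htne : t ≠ 0 := by
    rw [ht]; exact_mod_cast Real.sqrt_ne_zero'.mpr (by norm_num)
  have hti2 : t⁻¹ ^ 2 = 1/2 := by rw [inv_pow, ht2]; norm_num
  have hti4 : t⁻¹ ^ 4 = 1/4 := by rw [inv_pow, ht4]; norm_num
  have h00 : (werner p * (M 0 0 ⊗ₖ N 0 0)).trace = (1 + (p:ℂ)) / 6 := by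
    simp only [Matrix.trace, Matrix.diag, Matrix.mul_apply, Matrix.kroneckerMap_apply,
      werner, M, N, hvt0, hvt1, hk0, hk1, hsphi, v, phiPlus, Matrix.vecMulVec_apply,
      Matrix.add_apply, Matrix.smul_apply, Matrix.one_apply, Matrix.transpose_apply,
      Pi.star_apply, Fintype.sum_prod_type, Fin.sum_univ_succ, Fin.sum_univ_zero,
      Matrix.cons_val_zero, Matrix.cons_val_one, Matrix.head_cons, Matrix.of_apply,
      Matrix.head_fin_const, star_zero, star_one, star_neg, star_div₀, hcs, hct,
      ← hs, ← ht,
      Complex.conj_ofReal, map_ofNat, Matrix.cons_val', Matrix.empty_val',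
      Matrix.cons_val_fin_one, smul_eq_mul, mul_ite, ite_mul, mul_zero, zero_mul,
      mul_one, one_mul, Prod.mk.injEq, Prod.ext_iff]
    try norm_num
    try field_simp
    ring_nf
    try simp only [hs2, ht2, hs3, hs4, ht4, hti2, hti4, hcs, hct]
    try ring_nf
    try simp only [hs2, ht2, hs3, hs4, ht4, hti2, hti4]
    try push_cast
    try ring
    try norm_num
  have h01 : (werner p * (M 0 1 ⊗ₖ N 0 1)).trace = (1 + (p:ℂ)) / 6 := by
    simp only [Matrix.trace, Matrix.diag, Matrix.mul_apply, Matrix.kroneckerMap_apply,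
      werner, M, N, hvt0, hvt1, hk0, hk1, hsphi, v, phiPlus, Matrix.vecMulVec_apply,
      Matrix.add_apply, Matrix.smul_apply, Matrix.one_apply, Matrix.transpose_apply,
      Pi.star_apply, Fintype.sum_prod_type, Fin.sum_univ_succ, Fin.sum_univ_zero,
      Matrix.cons_val_zero, Matrix.cons_val_one, Matrix.head_cons, Matrix.of_apply,
      Matrix.head_fin_const, star_zero, star_one, star_neg, star_div₀, hcs, hct,
      ← hs, ← ht,
      Complex.conj_ofReal, map_ofNat, Matrix.cons_val', Matrix.empty_val',
      Matrix.cons_val_fin_one, smul_eq_mul, mul_ite, ite_mul, mul_zero, zero_mul,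
      mul_one, one_mul, Prod.mk.injEq, Prod.ext_iff]
    try norm_num
    try field_simp
    ring_nf
    try simp only [hs2, ht2, hs3, hs4, ht4, hti2, hti4, hcs, hct]
    try ring_nf
    try simp only [hs2, ht2, hs3, hs4, ht4, hti2, hti4]
    try push_cast
    try ring
    try norm_num
  have h02 : (werner p * (M 0 2 ⊗ₖ N 0 2)).trace = (1 + (p:ℂ)) / 6 := by
    have hq2 : ((Real.sqrt 2 : ℂ))^2 = 2 := by
      rw [← Complex.ofReal_pow, Real.sq_sqrt (by norm_num : (0:ℝ) ≤ 2)]; norm_num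
    have hqne : ((Real.sqrt 2 : ℂ)) ≠ 0 := by exact_mod_cast Real.sqrt_ne_zero'.mpr (by norm_num)
    simp [Matrix.trace, Matrix.mul_apply, Fintype.sum_prod_type, werner, M, N, ket,
      phiPlus, vecMulVec_apply, Matrix.one_apply]
    field_simp
    rw [hq2]
    ring
  have h10 : (werner p * (M 1 0 ⊗ₖ N 1 0)).trace = (1 + (p:ℂ)) / 6 := by
    simp only [Matrix.trace, Matrix.diag, Matrix.mul_apply, Matrix.kroneckerMap_apply,
      werner, M, N, hvt0, hvt1, hk0, hk1, hsphi, v, phiPlus, Matrix.vecMulVec_apply,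
      Matrix.add_apply, Matrix.smul_apply, Matrix.one_apply, Matrix.transpose_apply,
      Pi.star_apply, Fintype.sum_prod_type, Fin.sum_univ_succ, Fin.sum_univ_zero,
      Matrix.cons_val_zero, Matrix.cons_val_one, Matrix.head_cons, Matrix.of_apply,
      Matrix.head_fin_const, star_zero, star_one, star_neg, star_div₀, hcs, hct,
      ← hs, ← ht,
      Complex.conj_ofReal, map_ofNat, Matrix.cons_val', Matrix.empty_val',
      Matrix.cons_val_fin_one, smul_eq_mul, mul_ite, ite_mul, mul_zero, zero_mul,
      mul_one, one_mul, Prod.mk.injEq, Prod.ext_iff]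
    try norm_num
    try field_simp
    ring_nf
    try simp only [hs2, ht2, hs3, hs4, ht4, hti2, hti4, hcs, hct]
    try ring_nf
    try simp only [hs2, ht2, hs3, hs4, ht4, hti2, hti4]
    try push_cast
    try ring
    try norm_num
  have h11 : (werner p * (M 1 1 ⊗ₖ N 1 1)).trace = (1 + (p:ℂ)) / 6 := by
    simp only [Matrix.trace, Matrix.diag, Matrix.mul_apply, Matrix.kroneckerMap_apply,
      werner, M, N, hvt0, hvt1, hk0, hk1, hsphi, v, phiPlus, Matrix.vecMulVec_apply,
      Matrix.add_apply, Matrix.smul_apply, Matrix.one_apply, Matrix.transpose_apply,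
      Pi.star_apply, Fintype.sum_prod_type, Fin.sum_univ_succ, Fin.sum_univ_zero,
      Matrix.cons_val_zero, Matrix.cons_val_one, Matrix.head_cons, Matrix.of_apply,
      Matrix.head_fin_const, star_zero, star_one, star_neg, star_div₀, hcs, hct,
      ← hs, ← ht,
      Complex.conj_ofReal, map_ofNat, Matrix.cons_val', Matrix.empty_val',
      Matrix.cons_val_fin_one, smul_eq_mul, mul_ite, ite_mul, mul_zero, zero_mul,
      mul_one, one_mul, Prod.mk.injEq, Prod.ext_iff]
    try norm_num
    try field_simp
    ring_nf
    try simp only [hs2, ht2, hs3, hs4, ht4, hti2, hti4, hcs, hct]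
    try ring_nf
    try simp only [hs2, ht2, hs3, hs4, ht4, hti2, hti4]
    try push_cast
    try ring
    try norm_num
  have h12 : (werner p * (M 1 2 ⊗ₖ N 1 2)).trace = (1 + (p:ℂ)) / 6 := by
    have hq2 : ((Real.sqrt 2 : ℂ))^2 = 2 := by
      rw [← Complex.ofReal_pow, Real.sq_sqrt (by norm_num : (0:ℝ) ≤ 2)]; norm_num
    have hqne : ((Real.sqrt 2 : ℂ)) ≠ 0 := by exact_mod_cast Real.sqrt_ne_zero'.mpr (by norm_num)
    simp [Matrix.trace, Matrix.mul_apply, Fintype.sum_prod_type, werner, M, N, ket,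
      phiPlus, vecMulVec_apply, Matrix.one_apply]
    field_simp
    rw [hq2]
    ring
  simp only [Fin.sum_univ_two, Fin.sum_univ_three, h00, h01, h02, h10, h11, h12]
  push_cast
  ring
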